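/- arXiv:1411.3113 — 6 statements merged into one kernel-verified Lean document; each statement's English description precedes it below -/
import Mathlib

section
/- The ball B = {u ∈ ℝ^J : |u|² ≤ 2JF²} is forward invariant for the Lorenz '96 equation: if u is a solution on [0,∞) with |u(0)|² ≤ 2JF², then |u(t)|² ≤ 2JF² for all t ≥ 0. -/
open scoped RealInnerProductSpace

noncomputable section

/-- The Lorenz '96 bilinear map `B` on `ℝ^J`, with cyclic indexing via `ZMod J`:
`B(u,w)^(j) = -(1/2)[w^(j-1)u^(j+1) + u^(j-1)w^(j+1) - w^(j-2)u^(j-1) - u^(j-2)w^(j-1)]`. -/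
def L96B {J : ℕ} [NeZero J] (u w : EuclideanSpace ℝ (ZMod J)) :
    EuclideanSpace ℝ (ZMod J) :=
  WithLp.toLp 2 (fun j => -(1/2 : ℝ) * (w (j - 1) * u (j + 1) + u (j - 1) * w (j + 1)
    - w (j - 2) * u (j - 1) - u (j - 2) * w (j - 1)))

/-- The constant forcing vector `f = (F, ..., F)`. -/
def L96f {J : ℕ} [NeZero J] (F : ℝ) : EuclideanSpace ℝ (ZMod J) := WithLp.toLp 2 (fun _ => F)

/-- `u` solves the Lorenz '96 equation `u' = -u - B(u,u) + f` on the set `I`. -/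
def L96Sol {J : ℕ} [NeZero J] (F : ℝ) (I : Set ℝ)
    (u : ℝ → EuclideanSpace ℝ (ZMod J)) : Prop :=
  ∀ t ∈ I, HasDerivAt u (-u t - L96B (u t) (u t) + L96f F) t

/-- The projection `P` setting to zero every third coordinate
(those with 1-based index `≡ 0 mod 3`, i.e. `ZMod J`-index with value `≡ 0 mod 3`
when `3 ∣ J`). -/
def L96P {J : ℕ} [NeZero J] (u : EuclideanSpace ℝ (ZMod J)) :
    EuclideanSpace ℝ (ZMod J) :=
  WithLp.toLp 2 (fun j => if j.val % 3 = 0 then 0 else u j)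

/-- The complementary projection `Q = I - P`. -/
def L96Q {J : ℕ} [NeZero J] (u : EuclideanSpace ℝ (ZMod J)) :
    EuclideanSpace ℝ (ZMod J) :=
  u - L96P u

lemma inner_L96B_self {J : ℕ} [NeZero J] (v : EuclideanSpace ℝ (ZMod J)) :
    ⟪v, L96B v v⟫ = 0 := by
  have key : ∑ j : ZMod J, v (j-1) * v j * v (j+1)
      = ∑ j : ZMod J, v (j-2) * v (j-1) * v j := by
    refine Fintype.sum_equiv (Equiv.addRight (1 : ZMod J)) _ _ fun j => ?_
    have h1 : j + 1 - 2 = j - 1 := by ring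
    have h2 : j + 1 - 1 = j := by ring
    simp only [Equiv.coe_addRight]
    rw [h1, h2]
  have expand : ∀ j : ZMod J, v j * (L96B v v) j
      = v (j-2) * v (j-1) * v j - v (j-1) * v j * v (j+1) := by
    intro j; simp only [L96B, WithLp.ofLp_toLp]; ring
  calc ⟪v, L96B v v⟫ = ∑ j : ZMod J, v j * (L96B v v) j := by
        simp [PiLp.inner_apply, RCLike.inner_apply, conj_trivial, mul_comm]
    _ = ∑ j : ZMod J, (v (j-2) * v (j-1) * v j - v (j-1) * v j * v (j+1)) := by
        exact Finset.sum_congr rfl fun j _ => expand j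
    _ = 0 := by rw [Finset.sum_sub_distrib, key, sub_self]

lemma norm_L96f_sq {J : ℕ} [NeZero J] (F : ℝ) :
    ⟪(L96f F : EuclideanSpace ℝ (ZMod J)), L96f F⟫ = J * F ^ 2 := by
  simp only [PiLp.inner_apply, RCLike.inner_apply, conj_trivial, L96f, WithLp.ofLp_toLp,
    Finset.sum_const, Finset.card_univ, ZMod.card, nsmul_eq_mul]
  ring

/-- the ball `{u : |u|² ≤ 2JF²}` is forward invariant for Lorenz '96. -/
theorem l96_forward_invariant {J : ℕ} [NeZero J] (hJ : 3 ≤ J) (F : ℝ)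
    (u : ℝ → EuclideanSpace ℝ (ZMod J)) (hu : L96Sol F (Set.Ici 0) u)
    (hu0 : ‖u 0‖ ^ 2 ≤ 2 * J * F ^ 2) :
    ∀ t : ℝ, 0 ≤ t → ‖u t‖ ^ 2 ≤ 2 * J * F ^ 2 := by
  intro t ht
  set c : ℝ := (J : ℝ) * F ^ 2 with hc
  have hc0 : 0 ≤ c := by positivity
  set g : ℝ → ℝ := fun s => ⟪u s, u s⟫ with hgdef
  have hgnorm : ∀ s, g s = ‖u s‖ ^ 2 := fun s => real_inner_self_eq_norm_sq (u s)
  -- derivative of g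
  set D : ℝ → ℝ := fun s => 2 * ⟪u s, -u s - L96B (u s) (u s) + L96f F⟫ with hDdef
  have hg : ∀ s ∈ Set.Ici (0:ℝ), HasDerivAt g (D s) s := by
    intro s hs
    have h := (hu s hs).inner ℝ (hu s hs)
    have : ⟪u s, -u s - L96B (u s) (u s) + L96f F⟫
        + ⟪-u s - L96B (u s) (u s) + L96f F, u s⟫ = D s := by
      rw [real_inner_comm (u s)]; ring
    rw [this] at h; exact h
  -- key inequality: g s + D s ≤ c on [0, ∞)
  have key : ∀ s, g s + D s ≤ c := by
    intro s
    have hB := inner_L96B_self (u s)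
    have hexp : D s = -2 * g s + 2 * ⟪u s, (L96f F : EuclideanSpace ℝ (ZMod J))⟫ := by
      simp only [hDdef, inner_add_right, inner_sub_right, inner_neg_right, hB, hgdef]
      ring
    have hcs : ⟪u s, (L96f F : EuclideanSpace ℝ (ZMod J))⟫
        ≤ ‖u s‖ * ‖(L96f F : EuclideanSpace ℝ (ZMod J))‖ := real_inner_le_norm _ _
    have hf2 : ‖(L96f F : EuclideanSpace ℝ (ZMod J))‖ ^ 2 = c := by
      rw [← real_inner_self_eq_norm_sq, norm_L96f_sq]
    have hub : 2 * ⟪u s, (L96f F : EuclideanSpace ℝ (ZMod J))⟫ ≤ g s + c := by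
      have := sq_nonneg (‖u s‖ - ‖(L96f F : EuclideanSpace ℝ (ZMod J))‖)
      rw [hgnorm]
      nlinarith [hcs]
    rw [hexp]; linarith
  -- h := exp * (g - c) is antitone on [0,∞)
  set h : ℝ → ℝ := fun s => Real.exp s * (g s - c) with hhdef
  have hh : ∀ s ∈ Set.Ici (0:ℝ), HasDerivAt h (Real.exp s * (g s - c) + Real.exp s * D s) s := by
    intro s hs
    have := (Real.hasDerivAt_exp s).mul ((hg s hs).sub_const c)
    exact this
  have hanti : AntitoneOn h (Set.Ici (0:ℝ)) := by
    apply antitoneOn_of_deriv_nonpos (convex_Ici 0)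
    · intro s hs; exact (hh s hs).continuousAt.continuousWithinAt
    · intro s hs
      rw [interior_Ici] at hs
      exact (hh s (Set.mem_Ici.mpr (le_of_lt hs))).differentiableAt.differentiableWithinAt
    · intro s hs
      rw [interior_Ici] at hs
      rw [(hh s (Set.mem_Ici.mpr (le_of_lt hs))).deriv]
      have := key s
      nlinarith [Real.exp_pos s]
  have hle : h t ≤ h 0 := hanti (le_refl (0:ℝ)) ht ht
  have h0 : h 0 = g 0 - c := by simp [hhdef]
  -- conclude
  have hgt : g t ≤ Real.exp (-t) * (g 0 - c) + c := by
    have hepos : (0:ℝ) < Real.exp t := Real.exp_pos t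
    have : Real.exp t * (g t - c) ≤ g 0 - c := by rw [← h0]; exact hle
    rw [Real.exp_neg]
    rw [← sub_le_iff_le_add]
    calc g t - c = (Real.exp t)⁻¹ * (Real.exp t * (g t - c)) := by
          field_simp
      _ ≤ (Real.exp t)⁻¹ * (g 0 - c) := by
          apply mul_le_mul_of_nonneg_left this (le_of_lt (inv_pos.mpr hepos))
  have hg0 : g 0 ≤ 2 * c := by rw [hgnorm]; rw [hc]; linarith [hu0]
  rw [← hgnorm]
  have hexple : Real.exp (-t) ≤ 1 := Real.exp_le_one_iff.mpr (neg_nonpos.mpr ht)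
  have hexppos : (0:ℝ) < Real.exp (-t) := Real.exp_pos _
  rcases le_or_gt (g 0 - c) 0 with hcase | hcase
  · have : Real.exp (-t) * (g 0 - c) ≤ 0 := mul_nonpos_of_nonneg_of_nonpos hexppos.le hcase
    have : g t ≤ c := by linarith
    calc g t ≤ c := this
      _ ≤ 2 * (J:ℝ) * F ^ 2 := by rw [hc]; nlinarith [hc0]
  · have : Real.exp (-t) * (g 0 - c) ≤ g 0 - c := by nlinarith
    have : g t ≤ g 0 := by linarith
    calc g t ≤ g 0 := this
      _ ≤ 2 * (J:ℝ) * F ^ 2 := by linarith [hg0, hc0]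
end
end

section
/- Assume F > 0 and set K = 2JF². The ball B = {u ∈ ℝ^J : |u|² ≤ K} is absorbing for the Lorenz '96 equation: for every solution u on [0,∞) (with arbitrary initial condition u(0) ∈ ℝ^J) there exists a time T ≥ 0 such that |u(t)|² ≤ K for all t ≥ T. -/
open scoped RealInnerProductSpace

noncomputable section

lemma L96_inner_B {J : ℕ} [NeZero J] (u : EuclideanSpace ℝ (ZMod J)) :
    ⟪u, L96B u u⟫ = 0 := by
  have hsum : ∑ j : ZMod J, u j * (u (j-2) * u (j-1))
      = ∑ j : ZMod J, u j * (u (j-1) * u (j+1)) := by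
    refine Fintype.sum_equiv (Equiv.addRight (1 : ZMod J))
      (fun j => u j * (u (j-1) * u (j+1))) (fun j => u j * (u (j-2) * u (j-1))) ?_ |>.symm
    intro x
    have h1 : (x + 1) - 2 = x - 1 := by ring
    have h2 : (x + 1) - 1 = x := by ring
    simp only [Equiv.coe_addRight]
    rw [h1, h2]
    ring
  simp only [PiLp.inner_apply, RCLike.inner_apply, conj_trivial, L96B, PiLp.toLp_apply]
  have : ∀ j : ZMod J, u j * (-(1/2 : ℝ) * (u (j - 1) * u (j + 1) + u (j - 1) * u (j + 1)
      - u (j - 2) * u (j - 1) - u (j - 2) * u (j - 1)))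
      = u j * (u (j-2) * u (j-1)) - u j * (u (j-1) * u (j+1)) := by
    intro j; ring
  rw [Finset.sum_congr rfl (fun j _ => (mul_comm _ _).trans (this j)), Finset.sum_sub_distrib, hsum, sub_self]

lemma L96_norm_f_sq {J : ℕ} [NeZero J] (F : ℝ) :
    ‖(L96f F : EuclideanSpace ℝ (ZMod J))‖ ^ 2 = (J : ℝ) * F ^ 2 := by
  rw [← real_inner_self_eq_norm_sq]
  simp only [PiLp.inner_apply, RCLike.inner_apply, conj_trivial, L96f, PiLp.toLp_apply]
  rw [Finset.sum_const, Finset.card_univ, ZMod.card]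
  simp [sq]

/-- the ball `{u : |u|² ≤ K}`, `K = 2JF²`, is absorbing for Lorenz '96. -/
theorem l96_absorbing_ball {J : ℕ} [NeZero J] (hJ : 3 ≤ J) (F : ℝ) (hF : 0 < F)
    (u : ℝ → EuclideanSpace ℝ (ZMod J)) (hu : L96Sol F (Set.Ici 0) u) :
    ∃ T : ℝ, 0 ≤ T ∧ ∀ t : ℝ, T ≤ t → ‖u t‖ ^ 2 ≤ 2 * J * F ^ 2 := by
  set C : ℝ := (J : ℝ) * F ^ 2 with hCdef
  have hCpos : 0 < C := by
    have : (0:ℝ) < (J:ℝ) := by positivity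
    positivity
  set g : ℝ → ℝ := fun t => ‖u t‖ ^ 2 with hgdef
  -- derivative of g
  have hgderiv : ∀ t ∈ Set.Ici (0:ℝ),
      HasDerivAt g (2 * ⟪u t, -u t - L96B (u t) (u t) + L96f F⟫) t := by
    intro t ht
    have h := (hu t ht).inner ℝ (hu t ht)
    have heq : (⟪u t, -u t - L96B (u t) (u t) + L96f F⟫
        + ⟪-u t - L96B (u t) (u t) + L96f F, u t⟫)
        = 2 * ⟪u t, -u t - L96B (u t) (u t) + L96f F⟫ := by
      rw [real_inner_comm (u t)]; ring
    rw [heq] at h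
    have : g = fun t => ⟪u t, u t⟫ := by
      funext s; rw [real_inner_self_eq_norm_sq]
    rw [this]
    exact h
  -- auxiliary function h
  set h : ℝ → ℝ := fun t => (g t - C) * Real.exp t with hhdef
  have hhderiv : ∀ t ∈ Set.Ici (0:ℝ),
      HasDerivAt h ((2 * ⟪u t, -u t - L96B (u t) (u t) + L96f F⟫) * Real.exp t
        + (g t - C) * Real.exp t) t := by
    intro t ht
    exact ((hgderiv t ht).sub_const C).mul (Real.hasDerivAt_exp t)
  have hder_nonpos : ∀ t ∈ Set.Ici (0:ℝ),
      (2 * ⟪u t, -u t - L96B (u t) (u t) + L96f F⟫) * Real.exp t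
        + (g t - C) * Real.exp t ≤ 0 := by
    intro t ht
    have hexp : 0 < Real.exp t := Real.exp_pos t
    have hkey : 2 * ⟪u t, -u t - L96B (u t) (u t) + L96f F⟫ + (g t - C) ≤ 0 := by
      have hinner : ⟪u t, -u t - L96B (u t) (u t) + L96f F⟫
          = -‖u t‖^2 + ⟪u t, L96f F⟫ := by
        rw [inner_add_right, inner_sub_right, inner_neg_right,
          real_inner_self_eq_norm_sq, L96_inner_B]
        ring
      have hCS : ⟪u t, (L96f F : EuclideanSpace ℝ (ZMod J))⟫
          ≤ ‖u t‖ * ‖(L96f F : EuclideanSpace ℝ (ZMod J))‖ := real_inner_le_norm _ _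
      have hAM : 2 * (‖u t‖ * ‖(L96f F : EuclideanSpace ℝ (ZMod J))‖)
          ≤ ‖u t‖^2 + ‖(L96f F : EuclideanSpace ℝ (ZMod J))‖^2 := by
        nlinarith [sq_nonneg (‖u t‖ - ‖(L96f F : EuclideanSpace ℝ (ZMod J))‖)]
      have hfnorm : ‖(L96f F : EuclideanSpace ℝ (ZMod J))‖^2 = C := L96_norm_f_sq F
      have : g t = ‖u t‖^2 := rfl
      nlinarith
    calc (2 * ⟪u t, -u t - L96B (u t) (u t) + L96f F⟫) * Real.exp t
          + (g t - C) * Real.exp t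
        = (2 * ⟪u t, -u t - L96B (u t) (u t) + L96f F⟫ + (g t - C)) * Real.exp t := by
          ring
      _ ≤ 0 * Real.exp t := by
          apply mul_le_mul_of_nonneg_right hkey hexp.le
      _ = 0 := by ring
  -- h is antitone on Ici 0
  have hanti : AntitoneOn h (Set.Ici (0:ℝ)) := by
    apply antitoneOn_of_deriv_nonpos (convex_Ici 0)
    · intro t ht
      exact (hhderiv t ht).continuousAt.continuousWithinAt
    · rw [interior_Ici]
      intro t ht
      exact (hhderiv t (Set.mem_Ici.2 ht.le)).differentiableAt.differentiableWithinAt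
    · rw [interior_Ici]
      intro t ht
      rw [(hhderiv t (Set.mem_Ici.2 ht.le)).deriv]
      exact hder_nonpos t (Set.mem_Ici.2 ht.le)
  -- choose T
  refine ⟨max 0 (Real.log (g 0 / C)), le_max_left _ _, ?_⟩
  intro t htT
  have ht0 : (0:ℝ) ≤ t := le_trans (le_max_left _ _) htT
  have hh : h t ≤ h 0 := hanti (Set.mem_Ici.2 le_rfl) (Set.mem_Ici.2 ht0) ht0
  -- h t = (g t - C) e^t ≤ g 0 - C
  have hh' : (g t - C) * Real.exp t ≤ g 0 - C := by
    simpa [hhdef] using hh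
  have hgt : g t - C ≤ (g 0 - C) * Real.exp (-t) := by
    have hexp : 0 < Real.exp t := Real.exp_pos t
    have h2 : g t - C ≤ (g 0 - C) / Real.exp t := (le_div_iff₀ hexp).2 hh'
    rw [Real.exp_neg, ← div_eq_mul_inv]
    exact h2
  have hg0 : 0 ≤ g 0 := by positivity
  have hbound : (g 0 - C) * Real.exp (-t) ≤ C := by
    rcases le_or_gt (g 0) C with hle | hlt
    · have : (g 0 - C) * Real.exp (-t) ≤ 0 :=
        mul_nonpos_of_nonpos_of_nonneg (by linarith) (Real.exp_pos _).le
      linarith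
    · have hg0pos : 0 < g 0 := lt_trans hCpos hlt
      have hlog : Real.log (g 0 / C) ≤ t := le_trans (le_max_right _ _) htT
      have hexp_le : Real.exp (-t) ≤ C / g 0 := by
        rw [Real.exp_neg]
        rw [inv_le_comm₀ (Real.exp_pos _) (by positivity)]
        calc (C / g 0)⁻¹ = g 0 / C := by rw [inv_div]
          _ = Real.exp (Real.log (g 0 / C)) := (Real.exp_log (by positivity)).symm
          _ ≤ Real.exp t := Real.exp_le_exp.2 hlog
      calc (g 0 - C) * Real.exp (-t) ≤ g 0 * Real.exp (-t) := by
            apply mul_le_mul_of_nonneg_right (by linarith) (Real.exp_pos _).le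
        _ ≤ g 0 * (C / g 0) := by
            apply mul_le_mul_of_nonneg_left hexp_le hg0
            
        _ = C := by field_simp
  have : g t ≤ 2 * C := by linarith
  calc ‖u t‖ ^ 2 = g t := rfl
    _ ≤ 2 * C := this
    _ = 2 * J * F ^ 2 := by rw [hCdef]; ring
end
end

section
/- For every u ∈ ℝ^J one has B(Qu, Qu) = 0. -/
open scoped RealInnerProductSpace

noncomputable section

/-- `B(Qu, Qu) = 0` when `J = 3J'`. -/
theorem l96_BQQ_zero {J J' : ℕ} [NeZero J] (hJ' : 1 ≤ J') (hJ : J = 3 * J')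
    (u : EuclideanSpace ℝ (ZMod J)) :
    L96B (L96Q u) (L96Q u) = 0 := by
  have hdvd : (3 : ℕ) ∣ J := ⟨J', hJ⟩
  set c := ZMod.castHom hdvd (ZMod 3) with hc
  set v := L96Q u with hv
  have key : ∀ j : ZMod J, c j ≠ 0 → v j = 0 := by
    intro j hj
    show u j - (if j.val % 3 = 0 then 0 else u j) = 0
    rw [if_neg, sub_self]
    intro h
    apply hj
    have h1 : ((j.val : ℕ) : ZMod 3) = 0 :=
      (ZMod.natCast_eq_zero_iff _ _).2 (Nat.dvd_of_mod_eq_zero h)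
    rwa [ZMod.natCast_val] at h1
  apply (WithLp.ext_iff 2).2
  funext j
  show -(1/2 : ℝ) * (v (j - 1) * v (j + 1) + v (j - 1) * v (j + 1)
    - v (j - 2) * v (j - 1) - v (j - 2) * v (j - 1)) = 0
  have hm : ∀ k : ZMod 3, k = 0 ∨ k = 1 ∨ k = 2 := by decide
  rcases hm (c j) with h | h | h
  · have h1 : v (j - 1) = 0 := by
      apply key; simp only [map_sub, map_one, h]; decide
    rw [h1]; ring
  · have h1 : v (j + 1) = 0 := by
      apply key; simp only [map_add, map_one, h]; decide
    have h2 : v (j - 2) = 0 := by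
      apply key
      have h2c : c 2 = 2 := map_ofNat c 2
      simp only [map_sub, h2c, h]; decide
    rw [h1, h2]; ring
  · have h1 : v (j - 1) = 0 := by
      apply key; simp only [map_sub, map_one, h]; decide
    rw [h1]; ring
end
end

section
/- There exists a constant c > 0 (for instance c = 2√5) such that for all u, w ∈ ℝ^J one has |⟨B(u,u), w⟩| ≤ c·|u|·|w|·|Pu|. -/
open scoped RealInnerProductSpace

noncomputable section

section Aux

variable {J : ℕ} [NeZero J]

lemma coord_abs_le_norm (u : EuclideanSpace ℝ (ZMod J)) (j : ZMod J) :
    |u j| ≤ ‖u‖ := by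
  rw [EuclideanSpace.norm_eq, ← Real.sqrt_sq_eq_abs]
  apply Real.sqrt_le_sqrt
  have := Finset.single_le_sum (f := fun i => ‖u i‖ ^ 2)
    (fun i _ => sq_nonneg _) (Finset.mem_univ j)
  simpa [Real.norm_eq_abs, sq_abs] using this

lemma shift_sum_le (v w : EuclideanSpace ℝ (ZMod J)) (k : ZMod J) :
    ∑ j : ZMod J, |v (j + k)| * |w j| ≤ ‖v‖ * ‖w‖ := by
  have hs : (∑ j : ZMod J, |v (j + k)| * |w j|) ^ 2
      ≤ (∑ j : ZMod J, |v (j + k)| ^ 2) * (∑ j : ZMod J, |w j| ^ 2) :=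
    Finset.sum_mul_sq_le_sq_mul_sq _ _ _
  have hre : (∑ j : ZMod J, |v (j + k)| ^ 2) = ∑ j : ZMod J, |v j| ^ 2 :=
    Fintype.sum_equiv (Equiv.addRight k) _ _ (fun j => rfl)
  have hnn : 0 ≤ ∑ j : ZMod J, |v (j + k)| * |w j| :=
    Finset.sum_nonneg fun j _ => mul_nonneg (abs_nonneg _) (abs_nonneg _)
  have := Real.sqrt_le_sqrt hs
  rw [Real.sqrt_sq hnn, hre] at this
  refine this.trans ?_
  rw [Real.sqrt_mul (Finset.sum_nonneg fun j _ => sq_nonneg _),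
    EuclideanSpace.norm_eq, EuclideanSpace.norm_eq]
  simp [Real.norm_eq_abs]

lemma not_both_mod3 {J' : ℕ} (hJ : J = 3 * J') (a b : ZMod J)
    (h : a = b + 1 ∨ a = b + 2) : ¬ a.val % 3 = 0 ∨ ¬ b.val % 3 = 0 := by
  by_contra hc
  push_neg at hc
  obtain ⟨ha, hb⟩ := hc

  have h3 : (3 : ℕ) ∣ J := ⟨J', hJ⟩
  let φ := ZMod.castHom h3 (ZMod 3)
  have key : ∀ c : ZMod J, c.val % 3 = 0 → φ c = 0 := by
    intro c hcv
    have hdvd : (3 : ℕ) ∣ c.val := Nat.dvd_of_mod_eq_zero hcv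
    have : φ c = ((c.val : ℕ) : ZMod 3) := by
      rw [ZMod.castHom_apply, ZMod.natCast_val]
    rw [this]
    exact (ZMod.natCast_eq_zero_iff _ _).mpr hdvd
  have hφa := key a ha
  have hφb := key b hb
  rcases h with h | h
  · rw [h, map_add, hφb, map_one, zero_add] at hφa
    exact one_ne_zero hφa
  · rw [h, map_add, hφb, zero_add] at hφa
    have h2 : φ (2 : ZMod J) = 2 := by
      rw [show (2 : ZMod J) = 1 + 1 by norm_num, map_add, map_one]
      norm_num
    rw [h2] at hφa
    exact absurd hφa (by decide)

lemma pair_bound (u : EuclideanSpace ℝ (ZMod J)) (a b : ZMod J)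
    (h : ¬ a.val % 3 = 0 ∨ ¬ b.val % 3 = 0) :
    |u a * u b| ≤ ‖u‖ * (|L96P u a| + |L96P u b|) := by
  rcases h with h | h
  · have hPa : L96P u a = u a := by simp [L96P, h]
    calc |u a * u b| = |u b| * |u a| := by rw [abs_mul]; ring
      _ ≤ ‖u‖ * |u a| := by
          exact mul_le_mul_of_nonneg_right (coord_abs_le_norm u b) (abs_nonneg _)
      _ ≤ ‖u‖ * (|L96P u a| + |L96P u b|) := by
          rw [hPa]
          exact mul_le_mul_of_nonneg_left (le_add_of_nonneg_right (abs_nonneg _))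
            (norm_nonneg _)
  · have hPb : L96P u b = u b := by simp [L96P, h]
    calc |u a * u b| = |u a| * |u b| := abs_mul _ _
      _ ≤ ‖u‖ * |u b| := by
          exact mul_le_mul_of_nonneg_right (coord_abs_le_norm u a) (abs_nonneg _)
      _ ≤ ‖u‖ * (|L96P u a| + |L96P u b|) := by
          rw [hPb]
          exact mul_le_mul_of_nonneg_left (le_add_of_nonneg_left (abs_nonneg _))
            (norm_nonneg _)

end Aux

/-- there is `c > 0` with `|⟨B(u,u), w⟩| ≤ c|u||w||Pu|` for all `u,w`. -/
theorem l96_key_estimate {J J' : ℕ} [NeZero J] (hJ' : 1 ≤ J') (hJ : J = 3 * J') :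
    ∃ c : ℝ, 0 < c ∧ ∀ u w : EuclideanSpace ℝ (ZMod J),
      |⟪L96B u u, w⟫| ≤ c * ‖u‖ * ‖w‖ * ‖L96P u‖ := by
  refine ⟨4, by norm_num, fun u w => ?_⟩
  set v := L96P u with hv
  have hinner : ⟪L96B u u, w⟫ = ∑ j : ZMod J, (L96B u u) j * w j := by
    rw [PiLp.inner_apply]
    simp [RCLike.inner_apply]
    exact Finset.sum_congr rfl fun _ _ => mul_comm _ _
  have hB : ∀ j : ZMod J,
      (L96B u u) j = u (j - 2) * u (j - 1) - u (j - 1) * u (j + 1) := by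
    intro j; simp only [L96B, PiLp.toLp_apply]; ring
  have hterm : ∀ j : ZMod J, |(L96B u u) j * w j|
      ≤ ‖u‖ * ((|v (j + -2)| * |w j| + |v (j + -1)| * |w j|)
        + (|v (j + -1)| * |w j| + |v (j + 1)| * |w j|)) := by
    intro j
    have h1 : |u (j - 2) * u (j - 1)| ≤ ‖u‖ * (|v (j - 2)| + |v (j - 1)|) :=
      pair_bound u _ _ (not_both_mod3 hJ (j - 1) (j - 2) (Or.inl (by ring))).symm
    have h2 : |u (j - 1) * u (j + 1)| ≤ ‖u‖ * (|v (j - 1)| + |v (j + 1)|) := by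
      have := pair_bound u (j + 1) (j - 1)
        (not_both_mod3 hJ (j + 1) (j - 1) (Or.inr (by ring)))
      calc |u (j - 1) * u (j + 1)| = |u (j + 1) * u (j - 1)| := by rw [mul_comm]
        _ ≤ ‖u‖ * (|v (j + 1)| + |v (j - 1)|) := this
        _ = ‖u‖ * (|v (j - 1)| + |v (j + 1)|) := by ring
    have habs : |(L96B u u) j| ≤ ‖u‖ * (|v (j - 2)| + |v (j - 1)|)
        + ‖u‖ * (|v (j - 1)| + |v (j + 1)|) := by
      rw [hB j]
      exact (abs_sub _ _).trans (add_le_add h1 h2)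
    calc |(L96B u u) j * w j| = |(L96B u u) j| * |w j| := abs_mul _ _
      _ ≤ (‖u‖ * (|v (j - 2)| + |v (j - 1)|)
            + ‖u‖ * (|v (j - 1)| + |v (j + 1)|)) * |w j| :=
          mul_le_mul_of_nonneg_right habs (abs_nonneg _)
      _ = ‖u‖ * ((|v (j + -2)| * |w j| + |v (j + -1)| * |w j|)
            + (|v (j + -1)| * |w j| + |v (j + 1)| * |w j|)) := by
          rw [sub_eq_add_neg j 2, sub_eq_add_neg j 1]; ring
  have hCS2 := shift_sum_le v w (-2)
  have hCS1 := shift_sum_le v w (-1)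
  have hCS1' := shift_sum_le v w 1
  calc |⟪L96B u u, w⟫| = |∑ j : ZMod J, (L96B u u) j * w j| := by rw [hinner]
    _ ≤ ∑ j : ZMod J, |(L96B u u) j * w j| := Finset.abs_sum_le_sum_abs _ _
    _ ≤ ∑ j : ZMod J, ‖u‖ * ((|v (j + -2)| * |w j| + |v (j + -1)| * |w j|)
          + (|v (j + -1)| * |w j| + |v (j + 1)| * |w j|)) :=
        Finset.sum_le_sum fun j _ => hterm j
    _ = ‖u‖ * ((∑ j : ZMod J, |v (j + -2)| * |w j|
          + ∑ j : ZMod J, |v (j + -1)| * |w j|)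
          + (∑ j : ZMod J, |v (j + -1)| * |w j|
          + ∑ j : ZMod J, |v (j + 1)| * |w j|)) := by
        rw [← Finset.mul_sum]
        congr 1
        rw [Finset.sum_add_distrib, Finset.sum_add_distrib, Finset.sum_add_distrib]
    _ ≤ ‖u‖ * ((‖v‖ * ‖w‖ + ‖v‖ * ‖w‖) + (‖v‖ * ‖w‖ + ‖v‖ * ‖w‖)) := by
        have := norm_nonneg u
        gcongr
    _ = 4 * ‖u‖ * ‖w‖ * ‖v‖ := by ring
end
end

section
/- (Exact exponential decay of the synchronization error.) Let v be any solution of the Lorenz '96 equation on [0,∞). Let q : [0,∞) → ℝ^J be differentiable with q(0) = Qq(0) and q'(t) = −q(t) − Q·B(Pv(t)+q(t), Pv(t)+q(t)) + Qf for all t ≥ 0, and set m(t) = Pv(t) + q(t). Then for all t ≥ 0, |m(t) − v(t)|² = |m(0) − v(0)|²·e^{−2t}. -/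
open scoped RealInnerProductSpace

noncomputable section

-- auxiliary
def L96Pclm (J : ℕ) [NeZero J] : EuclideanSpace ℝ (ZMod J) →L[ℝ] EuclideanSpace ℝ (ZMod J) :=
  LinearMap.toContinuousLinearMap
  { toFun := L96P
    map_add' := by
      intro u w
      ext j
      show L96P (u + w) j = (L96P u + L96P w) j
      simp only [L96P, PiLp.add_apply, WithLp.ofLp_toLp]
      split <;> simp
    map_smul' := by
      intro c u
      ext j
      show L96P (c • u) j = (c • L96P u) j
      simp only [L96P, PiLp.smul_apply, smul_eq_mul, WithLp.ofLp_toLp]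
      split <;> simp }

example (J : ℕ) [NeZero J] (u : EuclideanSpace ℝ (ZMod J)) : L96Pclm J u = L96P u := rfl

lemma aux_decay {g : ℝ → ℝ} (h : ∀ s : ℝ, 0 ≤ s → HasDerivAt g (-g s) s)
    (h0 : g 0 = 0) : ∀ t : ℝ, 0 ≤ t → g t = 0 := by
  intro t ht
  have key := constant_of_has_deriv_right_zero (f := fun s => g s * Real.exp s) (a := 0) (b := t)
    (fun x hx => ((h x hx.1).mul (Real.hasDerivAt_exp x)).continuousAt.continuousWithinAt)
    (fun x hx => by
      have h2 : -g x * Real.exp x + g x * Real.exp x = 0 := by ring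
      exact (h2 ▸ ((h x hx.1).mul (Real.hasDerivAt_exp x))).hasDerivWithinAt)
    t ⟨ht, le_refl t⟩
  rw [h0, zero_mul] at key
  exact (mul_eq_zero.mp key).resolve_right (Real.exp_ne_zero t)

lemma aux_const {N : ℝ → ℝ} (h : ∀ s : ℝ, 0 ≤ s → HasDerivAt N 0 s) :
    ∀ t : ℝ, 0 ≤ t → N t = N 0 := fun t ht =>
  constant_of_has_deriv_right_zero (a := 0) (b := t)
    (fun x hx => (h x hx.1).continuousAt.continuousWithinAt)
    (fun x hx => (h x hx.1).hasDerivWithinAt) t ⟨ht, le_refl t⟩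


/-- exact exponential decay of the synchronization error:
`|m(t) − v(t)|² = |m(0) − v(0)|² e^{−2t}`, where `m = Pv + q`. -/
theorem l96_sync_error_decay {J J' : ℕ} [NeZero J] (hJ' : 1 ≤ J') (hJ : J = 3 * J')
    (F : ℝ)
    (v q : ℝ → EuclideanSpace ℝ (ZMod J))
    (hv : L96Sol F (Set.Ici 0) v)
    (hq0 : q 0 = L96Q (q 0))
    (hq : ∀ t : ℝ, 0 ≤ t → HasDerivAt q
      (-q t - L96Q (L96B (L96P (v t) + q t) (L96P (v t) + q t)) + L96Q (L96f F)) t) :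
    ∀ t : ℝ, 0 ≤ t →
      ‖(L96P (v t) + q t) - v t‖ ^ 2 =
        ‖(L96P (v 0) + q 0) - v 0‖ ^ 2 * Real.exp (-2 * t) := by
  have h3 : (3 : ℕ) ∣ J := ⟨J', hJ⟩
  have hJ3 : 1 < J := by omega
  haveI : Fact (1 < J) := ⟨hJ3⟩
  -- mod-3 arithmetic helpers
  have hone : ∀ j : ZMod J, (j + 1).val % 3 = (j.val + 1) % 3 := by
    intro j
    rw [ZMod.val_add, ZMod.val_one, Nat.mod_mod_of_dvd _ h3]
  have hlt : ∀ j : ZMod J, j.val % 3 < 3 := fun j => Nat.mod_lt _ (by norm_num)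
  -- Q at indices ≢ 0 is zero
  have hQzero : ∀ (u : EuclideanSpace ℝ (ZMod J)) (j : ZMod J), j.val % 3 ≠ 0 →
      L96Q u j = 0 := by
    intro u j hj
    show u j - L96P u j = 0
    simp [L96P, hj]
  -- q vanishes on indices ≢ 0 mod 3, for all times
  have hqz : ∀ (j : ZMod J), j.val % 3 ≠ 0 → ∀ s : ℝ, 0 ≤ s → q s j = 0 := by
    intro j hj
    have h0 : q 0 j = 0 := by rw [hq0]; exact hQzero _ j hj
    refine aux_decay (fun s hs => ?_) h0
    have hd := (EuclideanSpace.proj (𝕜 := ℝ) j).hasFDerivAt.comp_hasDerivAt s (hq s hs)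
    have hval : (EuclideanSpace.proj (𝕜 := ℝ) j)
        (-q s - L96Q (L96B (L96P (v s) + q s) (L96P (v s) + q s)) + L96Q (L96f F))
        = -(q s j) := by
      show (-q s - _ + _) j = _
      rw [PiLp.add_apply, PiLp.sub_apply, PiLp.neg_apply, hQzero _ j hj, hQzero _ j hj]
      ring
    rw [hval] at hd
    exact hd
  intro t ht
  -- notation
  set e : ℝ → EuclideanSpace ℝ (ZMod J) := fun s => (L96P (v s) + q s) - v s with he
  set Dv : ℝ → EuclideanSpace ℝ (ZMod J) := fun s => -v s - L96B (v s) (v s) + L96f F with hDv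
  set Dq : ℝ → EuclideanSpace ℝ (ZMod J) := fun s =>
    -q s - L96Q (L96B (L96P (v s) + q s) (L96P (v s) + q s)) + L96Q (L96f F) with hDq
  set De : ℝ → EuclideanSpace ℝ (ZMod J) := fun s => (L96P (Dv s) + Dq s) - Dv s with hDe
  have hme : ∀ s : ℝ, 0 ≤ s → HasDerivAt e (De s) s := by
    intro s hs
    have hP : HasDerivAt (fun r => L96P (v r)) (L96P (Dv s)) s :=
      (L96Pclm J).hasFDerivAt.comp_hasDerivAt s (hv s hs)
    exact (hP.add (hq s hs)).sub (hv s hs)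
  -- key pointwise identity
  have hkey : ∀ s : ℝ, 0 ≤ s → ⟪e s, De s⟫ = -‖e s‖ ^ 2 := by
    intro s hs
    rw [← real_inner_self_eq_norm_sq, PiLp.inner_apply, PiLp.inner_apply]
    simp only [RCLike.inner_apply, conj_trivial]
    rw [← Finset.sum_neg_distrib]
    refine Finset.sum_congr rfl fun j _ => ?_
    by_cases hj : j.val % 3 = 0
    · -- the m-coordinates used by B agree with v
      have hmv : ∀ k : ZMod J, k.val % 3 ≠ 0 → (L96P (v s) + q s) k = v s k := by
        intro k hk
        rw [PiLp.add_apply, hqz k hk s hs]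
        simp [L96P, hk]
      have hj1 : (j + 1).val % 3 ≠ 0 := by have := hone j; omega
      have hjm1 : (j - 1).val % 3 ≠ 0 := by
        have := hone (j - 1); rw [sub_add_cancel] at this
        have := hlt (j - 1); omega
      have hjm2 : (j - 2).val % 3 ≠ 0 := by
        have h1 := hone (j - 2)
        have h2 := hone (j - 1)
        rw [sub_add_cancel] at h2
        have h4 : j - 2 + 1 = j - 1 := by ring
        rw [h4] at h1
        have := hlt (j - 2); have := hlt (j - 1); omega
      have hBm : L96B (L96P (v s) + q s) (L96P (v s) + q s) j = L96B (v s) (v s) j := by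
        show -(1/2 : ℝ) * _ = -(1/2 : ℝ) * _
        rw [hmv _ hj1, hmv _ hjm1, hmv _ hjm2]
      have hPj : ∀ u : EuclideanSpace ℝ (ZMod J), L96P u j = 0 := by
        intro u; simp [L96P, hj]
      have hQj : ∀ u : EuclideanSpace ℝ (ZMod J), L96Q u j = u j := by
        intro u; show u j - L96P u j = u j; rw [hPj]; ring
      have hej : e s j = q s j - v s j := by
        rw [he]; show (L96P (v s) + q s) j - v s j = _
        rw [PiLp.add_apply, hPj]; ring
      have hDqj : Dq s j = -q s j
          - L96Q (L96B (L96P (v s) + q s) (L96P (v s) + q s)) j + L96Q (L96f F) j := rfl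
      have hDvj : Dv s j = -v s j - L96B (v s) (v s) j + L96f F j := rfl
      have hDej : De s j = -(q s j - v s j) := by
        have h0 : De s j = L96P (Dv s) j + Dq s j - Dv s j := rfl
        rw [h0, hPj, hDqj, hDvj, hQj, hQj, hBm]
        ring
      rw [hej, hDej]; ring
    · have hej : e s j = 0 := by
        rw [he]
        show (L96P (v s) + q s) j - v s j = 0
        rw [PiLp.add_apply, hqz j hj s hs]
        simp [L96P, hj]
      rw [hej]; ring
  -- the quantity ‖e‖² e^{2t} is constant
  have hN : ∀ s : ℝ, 0 ≤ s → HasDerivAt (fun r => ‖e r‖ ^ 2 * Real.exp (2 * r)) 0 s := by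
    intro s hs
    have h1 : HasDerivAt (fun r => ‖e r‖ ^ 2) (-2 * ‖e s‖ ^ 2) s := by
      have := (hme s hs).inner ℝ (hme s hs)
      have hfun : (fun r => ⟪e r, e r⟫) = fun r => ‖e r‖ ^ 2 := by
        funext r; exact real_inner_self_eq_norm_sq (e r)
      have hval : ⟪e s, De s⟫ + ⟪De s, e s⟫ = -2 * ‖e s‖ ^ 2 := by
        have h2 : ⟪De s, e s⟫ = ⟪e s, De s⟫ := real_inner_comm _ _
        rw [h2, hkey s hs]; ring
      rw [hfun, hval] at this
      exact this
    have h2 : HasDerivAt (fun r => Real.exp (2 * r)) (Real.exp (2 * s) * 2) s := by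
      simpa using ((hasDerivAt_id s).const_mul 2).exp
    have := h1.mul h2
    have hz : -2 * ‖e s‖ ^ 2 * Real.exp (2 * s) + ‖e s‖ ^ 2 * (Real.exp (2 * s) * 2) = 0 := by
      ring
    rw [hz] at this
    exact this
  have hc := aux_const hN t ht
  simp only [mul_zero, Real.exp_zero, mul_one] at hc
  have : ‖e t‖ ^ 2 = ‖e 0‖ ^ 2 * Real.exp (-2 * t) := by
    rw [← hc, mul_assoc, ← Real.exp_add]
    norm_num
  exact this
end
end

section
/- (Coercivity of the nudged linearization.) Let K > 0, η > 0, and let v ∈ ℝ^J with |v|² ≤ K. Then for every δ ∈ ℝ^J, ⟨δ + 2B(v,δ) + B(δ,δ) + (1/η)Pδ, δ⟩ ≥ (1 − c²Kη/4)·|δ|². -/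
open scoped RealInnerProductSpace

noncomputable section

lemma inner_sum' {J : ℕ} [NeZero J] (x z : EuclideanSpace ℝ (ZMod J)) :
    ⟪x, z⟫ = ∑ j : ZMod J, x j * z j := by
  simp [PiLp.inner_apply, RCLike.inner_apply]
  exact Finset.sum_congr rfl fun _ _ => mul_comm _ _

lemma L96B_self_inner {J : ℕ} [NeZero J] (u : EuclideanSpace ℝ (ZMod J)) :
    ⟪L96B u u, u⟫ = 0 := by
  rw [inner_sum']
  have h1 : ∑ j : ZMod J, u (j-2) * u (j-1) * u j
      = ∑ j : ZMod J, u (j-1) * u j * u (j+1) := by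
    apply Fintype.sum_equiv (Equiv.subRight (1:ZMod J))
    intro j
    simp only [Equiv.subRight_apply]
    rw [show j-1-1 = j-2 from by ring, show j-1+1 = j from by ring]
  have : ∑ j : ZMod J, L96B u u j * u j
      = ∑ j : ZMod J, (u (j-2) * u (j-1) * u j - u (j-1) * u j * u (j+1)) := by
    apply Finset.sum_congr rfl; intro j _; simp only [L96B, PiLp.toLp_apply]; ring
  rw [this, Finset.sum_sub_distrib, h1, sub_self]

lemma L96B_expand {J : ℕ} [NeZero J] (v δ : EuclideanSpace ℝ (ZMod J)) :
    ⟪L96B (v+δ) (v+δ), v+δ⟫ + ⟪L96B (v-δ) (v-δ), v-δ⟫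
      = 2*⟪L96B v v, v⟫ + 2*⟪L96B δ δ, v⟫ + 4*⟪L96B v δ, δ⟫ := by
  simp only [inner_sum', L96B, PiLp.toLp_apply, PiLp.add_apply, PiLp.sub_apply, Finset.mul_sum,
    ← Finset.sum_add_distrib]
  apply Finset.sum_congr rfl; intro j _; ring

lemma L96B_mixed {J : ℕ} [NeZero J] (v δ : EuclideanSpace ℝ (ZMod J)) :
    2*⟪L96B v δ, δ⟫ = -⟪L96B δ δ, v⟫ := by
  have h := L96B_expand v δ
  rw [L96B_self_inner, L96B_self_inner, L96B_self_inner] at h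
  linarith

lemma L96P_inner {J : ℕ} [NeZero J] (δ : EuclideanSpace ℝ (ZMod J)) :
    ⟪L96P δ, δ⟫ = ‖L96P δ‖^2 := by
  rw [← real_inner_self_eq_norm_sq, inner_sum', inner_sum']
  apply Finset.sum_congr rfl; intro j _
  simp only [L96P, PiLp.toLp_apply]
  by_cases h : j.val % 3 = 0 <;> simp [h]

lemma scalar_ineq (c K η a p vn x : ℝ) (hη : 0 < η) (ha : 0 ≤ a) (hp : 0 ≤ p)
    (hvn : 0 ≤ vn) (hv2 : vn^2 ≤ K) (hc : 0 ≤ c)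
    (hx : x ≤ c * a * vn * p) :
    (1 - c ^ 2 * K * η / 4) * a ^ 2 ≤ a^2 - x + (1/η) * p^2 := by
  have h1 : η * (1/η) = 1 := mul_one_div_cancel hη.ne'
  have h2 : 0 ≤ (1/η) * (p - c*η*vn*a/2)^2 :=
    mul_nonneg (by positivity) (sq_nonneg _)
  nlinarith [mul_nonneg (mul_nonneg (mul_nonneg (mul_nonneg hc hc) hη.le) (sq_nonneg a)) (sub_nonneg.mpr hv2)]

/-- coercivity of the nudged linearization:
`⟨δ + 2B(v,δ) + B(δ,δ) + (1/η)Pδ, δ⟩ ≥ (1 − c²Kη/4)|δ|²`. -/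
theorem l96_coercivity {J J' : ℕ} [NeZero J] (hJ' : 1 ≤ J') (hJ : J = 3 * J')
    (c : ℝ) (hc : 0 < c)
    (hcB : ∀ u w : EuclideanSpace ℝ (ZMod J),
      |⟪L96B u u, w⟫| ≤ c * ‖u‖ * ‖w‖ * ‖L96P u‖)
    (K η : ℝ) (hK : 0 < K) (hη : 0 < η)
    (v : EuclideanSpace ℝ (ZMod J)) (hv : ‖v‖ ^ 2 ≤ K) :
    ∀ δ : EuclideanSpace ℝ (ZMod J),
      (1 - c ^ 2 * K * η / 4) * ‖δ‖ ^ 2 ≤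
        ⟪δ + (2 : ℝ) • L96B v δ + L96B δ δ + (1 / η) • L96P δ, δ⟫ := by
  intro δ
  have hexp : ⟪δ + (2 : ℝ) • L96B v δ + L96B δ δ + (1 / η) • L96P δ, δ⟫
      = ‖δ‖^2 + 2*⟪L96B v δ, δ⟫ + ⟪L96B δ δ, δ⟫ + (1/η)*⟪L96P δ, δ⟫ := by
    rw [inner_add_left, inner_add_left, inner_add_left, real_inner_smul_left,
      real_inner_smul_left, real_inner_self_eq_norm_sq]
  rw [hexp, L96B_self_inner, L96B_mixed, L96P_inner, add_zero]
  have hx : ⟪L96B δ δ, v⟫ ≤ c * ‖δ‖ * ‖v‖ * ‖L96P δ‖ :=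
    le_trans (le_abs_self _) (hcB δ v)
  have := scalar_ineq c K η ‖δ‖ ‖L96P δ‖ ‖v‖ ⟪L96B δ δ, v⟫ hη (norm_nonneg _)
    (norm_nonneg _) (norm_nonneg _) hv hc.le hx
  linarith
end
end
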